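/- arXiv:1701.03908 — 4 statements merged into one kernel-verified Lean document; each statement's English description precedes it below -/
import Mathlib

section
/- With M = [[−H̃, −L⊗I_m],[L⊗I_m, 0]] where H̃ is PSD and L is symmetric, if λ = ir (r ∈ ℝ, r ≠ 0) is a purely imaginary eigenvalue of M with eigenvector β = [β_a; β_b], then H̃β_a = 0, (L⊗I_m)β_b = −ir β_a, and (L⊗I_m)β_a = ir β_b. -/
open Matrix BigOperators Kronecker
open scoped ComplexOrder

/-- If `M = [[-H̃, -L⊗I_m],[L⊗I_m, 0]]` with `H̃` PSD and `L` symmetric, and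
`β = [β_a; β_b]` is an eigenvector of `M` with purely imaginary eigenvalue `i r` (`r ≠ 0`),
then `H̃ β_a = 0`, `(L⊗I_m) β_b = -i r β_a` and `(L⊗I_m) β_a = i r β_b`. -/
theorem stmt_4 {N m : ℕ} (L : Matrix (Fin N) (Fin N) ℝ) (hL : L.IsSymm)
    (Htil : Matrix (Fin N × Fin m) (Fin N × Fin m) ℝ) (hHtil : Htil.PosSemidef)
    (r : ℝ) (hr : r ≠ 0) (βa βb : Fin N × Fin m → ℂ)
    (hβ : Sum.elim βa βb ≠ 0)
    (heig : ((Matrix.fromBlocks (-Htil)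
        (-(L ⊗ₖ (1 : Matrix (Fin m) (Fin m) ℝ)))
        (L ⊗ₖ (1 : Matrix (Fin m) (Fin m) ℝ)) 0).map Complex.ofReal).mulVec
          (Sum.elim βa βb)
        = ((r : ℂ) * Complex.I) • Sum.elim βa βb) :
    (Htil.map Complex.ofReal).mulVec βa = 0 ∧
    ((L ⊗ₖ (1 : Matrix (Fin m) (Fin m) ℝ)).map Complex.ofReal).mulVec βb
      = (-(r : ℂ) * Complex.I) • βa ∧
    ((L ⊗ₖ (1 : Matrix (Fin m) (Fin m) ℝ)).map Complex.ofReal).mulVec βa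
      = ((r : ℂ) * Complex.I) • βb := by
  set c : ℂ := (r : ℂ) * Complex.I with hc
  set K : Matrix (Fin N × Fin m) (Fin N × Fin m) ℂ :=
    ((L ⊗ₖ (1 : Matrix (Fin m) (Fin m) ℝ)).map Complex.ofReal) with hK
  set A : Matrix (Fin N × Fin m) (Fin N × Fin m) ℂ := (Htil.map Complex.ofReal) with hA
  -- A is PSD
  have hApsd : A.PosSemidef := by
    obtain ⟨B, hB⟩ : ∃ B : Matrix (Fin N × Fin m) (Fin N × Fin m) ℝ, Htil = Bᴴ * B := by
      open scoped MatrixOrder in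
      refine ⟨CFC.sqrt Htil, ?_⟩
      rw [← star_eq_conjTranspose, (CFC.sqrt_nonneg Htil).isSelfAdjoint.star_eq,
        CFC.sqrt_mul_sqrt_self Htil hHtil.nonneg]
    suffices hAB : A = (B.map Complex.ofReal)ᴴ * B.map Complex.ofReal by
      rw [hAB]; exact Matrix.posSemidef_conjTranspose_mul_self _
    rw [hA, hB]
    ext i j
    simp [Matrix.mul_apply, Matrix.conjTranspose_apply]
  -- K is Hermitian
  have hKh : K.IsHermitian := by
    rw [Matrix.IsHermitian]
    ext ⟨i1, i2⟩ ⟨j1, j2⟩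
    simp only [hK, Matrix.conjTranspose_apply, Matrix.map_apply, Matrix.kroneckerMap_apply,
      RCLike.star_def, Complex.conj_ofReal, Complex.ofReal_inj]
    rw [hL.apply, Matrix.one_apply, Matrix.one_apply]
    simp [eq_comm]
  rw [Matrix.fromBlocks_map, Matrix.fromBlocks_mulVec] at heig
  have hmA : ((-Htil).map Complex.ofReal) = -A := by ext i j; simp [hA]
  have hmK : ((-(L ⊗ₖ (1 : Matrix (Fin m) (Fin m) ℝ))).map Complex.ofReal) = -K := by
    ext i j; simp [hK]
  have h0 : ((0 : Matrix (Fin N × Fin m) (Fin N × Fin m) ℝ).map Complex.ofReal)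
      = 0 := by ext i j; simp
  rw [hmA, hmK, h0] at heig
  have e1 : A *ᵥ βa + K *ᵥ βb = (-c) • βa := by
    funext i
    have := congrFun heig (Sum.inl i)
    simp only [Sum.elim_inl, Sum.elim_comp_inl, Sum.elim_comp_inr, Pi.add_apply,
      Matrix.neg_mulVec, Pi.neg_apply, Pi.smul_apply, smul_eq_mul, neg_smul] at this ⊢
    linear_combination -this
  have e2 : K *ᵥ βa = c • βb := by
    funext i
    have := congrFun heig (Sum.inr i)
    simpa [Sum.elim_comp_inl, Sum.elim_comp_inr, Matrix.zero_mulVec] using this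
  -- imaginary parts of star x ⬝ᵥ x vanish
  have him : ∀ x : Fin N × Fin m → ℂ, (star x ⬝ᵥ x).im = 0 := by
    intro x
    rw [dotProduct, Complex.im_sum]
    apply Finset.sum_eq_zero
    intro i _
    simp [Complex.mul_im]
    ring
  set na : ℂ := star βa ⬝ᵥ βa with hna
  set nb : ℂ := star βb ⬝ᵥ βb with hnb
  have hsym : star βa ⬝ᵥ (K *ᵥ βb) = star (K *ᵥ βa) ⬝ᵥ βb := by
    rw [Matrix.star_mulVec, hKh, Matrix.dotProduct_mulVec]
  have hval : star βa ⬝ᵥ (K *ᵥ βb) = (-c) * nb := by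
    rw [hsym, e2]
    simp [hnb, dotProduct, hc, Finset.mul_sum, mul_comm, mul_assoc, mul_left_comm]
  set q : ℂ := star βa ⬝ᵥ (A *ᵥ βa) with hq
  have hqeq : q + (-c) * nb = (-c) * na := by
    rw [hq, ← hval, ← dotProduct_add, e1]
    simp [hna, dotProduct_smul]
  have hqpos : 0 ≤ q := hApsd.dotProduct_mulVec_nonneg βa
  have hqim : q.im = 0 := ((Complex.le_def.mp hqpos).2).symm
  have hq0 : q = 0 := by
    have hs : q = (-c) * (na - nb) := by linear_combination hqeq
    apply Complex.ext
    · have h1 : (na - nb).im = 0 := by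
        simp [hna, hnb, him βa, him βb]
      rw [hs]
      simp [hc, Complex.mul_re, Complex.mul_im, h1]
    · simpa using hqim
  have hAz : A *ᵥ βa = 0 := (hApsd.dotProduct_mulVec_zero_iff βa).mp hq0
  refine ⟨hAz, ?_, e2⟩
  rw [hAz, zero_add] at e1
  rw [e1]
  simp [hc]
end

section
/- Suppose there exists an eigenvector α of L with eigenvalue r > 0 such that dim span{h_i : α[i] ≠ 0} < m. Then M = [[−H̃, −L⊗I_m],[L⊗I_m, 0]] has a purely imaginary eigenvalue ir ≠ 0; specifically, if η ≠ 0 satisfies h_iᵀη = 0 for all i with α[i] ≠ 0, then β = [α⊗η; (L⊗I_m)(α⊗η)/(ir)] is an eigenvector of M with eigenvalue ir. -/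
open Matrix BigOperators Kronecker

/-- If `L α = r α` with `r > 0` and there is `η ≠ 0` with `h iᵀ η = 0` whenever `α i ≠ 0`,
then `β = [α⊗η ; (L⊗I_m)(α⊗η)/(i r)]` is an eigenvector of
`M = [[-H̃, -L⊗I_m],[L⊗I_m, 0]]` with the purely imaginary eigenvalue `i r ≠ 0`. -/
theorem stmt_7 {N m : ℕ} (L : Matrix (Fin N) (Fin N) ℝ) (hL : L.IsSymm)
    (h : Fin N → Fin m → ℝ)
    (Htil : Matrix (Fin N × Fin m) (Fin N × Fin m) ℝ)
    (hHtil : ∀ p q : Fin N × Fin m,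
      Htil p q = if p.1 = q.1 then h p.1 p.2 * h p.1 q.2 else 0)
    (r : ℝ) (hr : 0 < r) (α : Fin N → ℝ) (hα : α ≠ 0)
    (heig : L.mulVec α = r • α)
    (η : Fin m → ℝ) (hη : η ≠ 0)
    (horth : ∀ i, α i ≠ 0 → h i ⬝ᵥ η = 0) :
    Sum.elim (fun p : Fin N × Fin m => ((α p.1 * η p.2 : ℝ) : ℂ))
        (fun p : Fin N × Fin m =>
          (((r : ℂ) * Complex.I)⁻¹ •
            (((L ⊗ₖ (1 : Matrix (Fin m) (Fin m) ℝ)).map Complex.ofReal).mulVec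
              (fun q : Fin N × Fin m => ((α q.1 * η q.2 : ℝ) : ℂ)))) p) ≠ 0 ∧
    ((Matrix.fromBlocks (-Htil)
        (-(L ⊗ₖ (1 : Matrix (Fin m) (Fin m) ℝ)))
        (L ⊗ₖ (1 : Matrix (Fin m) (Fin m) ℝ)) 0).map Complex.ofReal).mulVec
      (Sum.elim (fun p : Fin N × Fin m => ((α p.1 * η p.2 : ℝ) : ℂ))
        (fun p : Fin N × Fin m =>
          (((r : ℂ) * Complex.I)⁻¹ •
            (((L ⊗ₖ (1 : Matrix (Fin m) (Fin m) ℝ)).map Complex.ofReal).mulVec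
              (fun q : Fin N × Fin m => ((α q.1 * η q.2 : ℝ) : ℂ)))) p))
      = ((r : ℂ) * Complex.I) •
        Sum.elim (fun p : Fin N × Fin m => ((α p.1 * η p.2 : ℝ) : ℂ))
          (fun p : Fin N × Fin m =>
            (((r : ℂ) * Complex.I)⁻¹ •
              (((L ⊗ₖ (1 : Matrix (Fin m) (Fin m) ℝ)).map Complex.ofReal).mulVec
                (fun q : Fin N × Fin m => ((α q.1 * η q.2 : ℝ) : ℂ)))) p) ∧
    ((r : ℂ) * Complex.I) ∈ spectrum ℂ ((Matrix.fromBlocks (-Htil)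
        (-(L ⊗ₖ (1 : Matrix (Fin m) (Fin m) ℝ)))
        (L ⊗ₖ (1 : Matrix (Fin m) (Fin m) ℝ)) 0).map Complex.ofReal) := by
  set v : Fin N × Fin m → ℂ := fun q : Fin N × Fin m => ((α q.1 * η q.2 : ℝ) : ℂ) with hvdef
  set K : Matrix (Fin N × Fin m) (Fin N × Fin m) ℂ :=
    (L ⊗ₖ (1 : Matrix (Fin m) (Fin m) ℝ)).map Complex.ofReal with hKdef
  set μ : ℂ := (r : ℂ) * Complex.I with hμdef
  have hμ0 : μ ≠ 0 := by
    simp [hμdef, Complex.I_ne_zero, Complex.ofReal_ne_zero, hr.ne']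
  -- Lemma A : K v = r v
  have hKv : K.mulVec v = (r : ℂ) • v := by
    funext p
    obtain ⟨i, a⟩ := p
    have h1 := congrFun heig i
    simp only [mulVec, dotProduct, Pi.smul_apply, smul_eq_mul] at h1
    simp only [hKdef, hvdef, mulVec, dotProduct, Pi.smul_apply, smul_eq_mul,
      Fintype.sum_prod_type, map_apply, kroneckerMap_apply, one_apply, mul_ite, mul_one,
      mul_zero, ite_mul, zero_mul]
    rw [Finset.sum_comm]
    simp only [apply_ite Complex.ofReal, Complex.ofReal_zero, ite_mul, zero_mul,
      Finset.sum_ite_irrel, Finset.sum_const_zero, Finset.sum_ite_eq, Finset.mem_univ, if_true]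
    have key : ∀ x, ((L i x : ℂ)) * ((α x * η a : ℝ) : ℂ) = ((L i x * α x : ℝ) : ℂ) * (η a : ℝ) := by
      intro x; push_cast; ring
    rw [Finset.sum_congr rfl fun x _ => key x, ← Finset.sum_mul, ← Complex.ofReal_sum]
    rw [show (∑ x, L i x * α x) = r * α i from h1]
    push_cast; ring
  -- Lemma B : H̃ v = 0
  have hHv : (Htil.map Complex.ofReal).mulVec v = 0 := by
    funext p
    obtain ⟨i, a⟩ := p
    simp only [hvdef, mulVec, dotProduct, Fintype.sum_prod_type, map_apply, Pi.zero_apply]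
    rw [Finset.sum_comm]
    have step : ∀ b : Fin m, ∑ j : Fin N, (Htil (i, a) (j, b) : ℂ) * ((α j * η b : ℝ) : ℂ)
        = ((h i a * α i * (h i b * η b) : ℝ) : ℂ) := by
      intro b
      have : ∀ j : Fin N, (Htil (i, a) (j, b) : ℂ) * ((α j * η b : ℝ) : ℂ)
          = if i = j then ((h i a * h i b * (α j * η b) : ℝ) : ℂ) else 0 := by
        intro j
        rw [hHtil]
        by_cases hij : i = j <;> simp [hij] <;> (push_cast; ring)
      rw [Finset.sum_congr rfl fun j _ => this j]
      simp only [Finset.sum_ite_eq, Finset.mem_univ, if_true]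
      push_cast; ring
    rw [Finset.sum_congr rfl fun b _ => step b, ← Complex.ofReal_sum]
    rcases eq_or_ne (α i) 0 with h0 | h0
    · simp [h0]
    · have := horth i h0
      simp only [dotProduct] at this
      rw [show (∑ b, h i a * α i * (h i b * η b)) = h i a * α i * (∑ b, h i b * η b) by
        rw [Finset.mul_sum]]
      simp [this]
  -- the eigenvector and its equation
  set w : Fin N × Fin m → ℂ := μ⁻¹ • (K.mulVec v) with hwdef
  have hw : (fun p => (μ⁻¹ • (K.mulVec v)) p) = w := rfl
  have hmain : ((Matrix.fromBlocks (-Htil) (-(L ⊗ₖ (1 : Matrix (Fin m) (Fin m) ℝ)))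
        (L ⊗ₖ (1 : Matrix (Fin m) (Fin m) ℝ)) 0).map Complex.ofReal).mulVec (Sum.elim v w)
      = μ • Sum.elim v w := by
    have hmap : (Matrix.fromBlocks (-Htil) (-(L ⊗ₖ (1 : Matrix (Fin m) (Fin m) ℝ)))
        (L ⊗ₖ (1 : Matrix (Fin m) (Fin m) ℝ)) 0).map Complex.ofReal
        = Matrix.fromBlocks (-(Htil.map Complex.ofReal)) (-K) K 0 := by
      funext p q
      cases p <;> cases q <;>
        simp [Matrix.map_apply, Matrix.fromBlocks, hKdef]
    rw [hmap, Matrix.fromBlocks_mulVec]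
    simp only [Sum.elim_comp_inl, Sum.elim_comp_inr]
    have hKw : K.mulVec w = (μ⁻¹ * r * r) • v := by
      rw [hwdef, Matrix.mulVec_smul, hKv, Matrix.mulVec_smul, hKv, smul_smul, smul_smul]
      try ring_nf
    have hscal : -(μ⁻¹ * r * r) = μ := by
      have h2 : μ * μ = -((r:ℂ) * r) := by
        rw [hμdef]; ring_nf; rw [Complex.I_sq]; ring
      field_simp
      linear_combination -h2
    funext p
    cases p with
    | inl p =>
        simp only [Sum.elim_inl, Matrix.neg_mulVec, hHv, hKw, Pi.add_apply, Pi.neg_apply,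
          Pi.smul_apply, Pi.zero_apply, neg_zero, zero_add, smul_eq_mul]
        rw [show -((μ⁻¹ * ↑r * ↑r) * v p) = (-(μ⁻¹ * ↑r * ↑r)) * v p by ring, hscal]
    | inr p =>
        simp only [Sum.elim_inr, hKv, Matrix.zero_mulVec, Pi.add_apply, Pi.zero_apply,
          add_zero, hwdef, Pi.smul_apply, smul_eq_mul]
        field_simp
  have hne : Sum.elim v w ≠ 0 := by
    obtain ⟨i, hi⟩ := Function.ne_iff.mp hα
    obtain ⟨a, ha⟩ := Function.ne_iff.mp hη
    intro hcontra
    have := congrFun hcontra (Sum.inl (i, a))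
    simp only [Sum.elim_inl, hvdef, Pi.zero_apply, Complex.ofReal_eq_zero] at this
    exact (mul_ne_zero hi ha) this
  refine ⟨by rw [hw]; exact hne, by rw [hw]; exact hmain, ?_⟩
  rw [← AlgEquiv.spectrum_eq
      (Matrix.toLinAlgEquiv' :
        Matrix (Fin N × Fin m ⊕ Fin N × Fin m) (Fin N × Fin m ⊕ Fin N × Fin m) ℂ ≃ₐ[ℂ] _),
    ← Module.End.hasEigenvalue_iff_mem_spectrum]
  apply Module.End.hasEigenvalue_of_hasEigenvector (x := Sum.elim v w)
  refine ⟨Module.End.mem_eigenspace_iff.mpr ?_, hne⟩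
  show Matrix.toLin' _ (Sum.elim v w) = _
  rw [Matrix.toLin'_apply]
  exact hmain
end

section
/- Let L be the Laplacian of a connected graph on N nodes and h_i ∈ ℝ^m span ℝ^m (i.e., rank H = m where H has rows h_iᵀ). If δ = [δ_a; δ_b] satisfies Mδ = 0 with M = [[−H̃, −L⊗I_m],[L⊗I_m, 0]], then δ_a = 0 and δ_b = 1⊗η for some η ∈ ℝ^m; in particular the kernel of M has dimension m. -/
open Matrix BigOperators Kronecker

lemma lk_mulVec {N m : ℕ} (L : Matrix (Fin N) (Fin N) ℝ) (x : Fin N × Fin m → ℝ)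
    (i : Fin N) (k : Fin m) :
    ((L ⊗ₖ (1 : Matrix (Fin m) (Fin m) ℝ)) *ᵥ x) (i, k) = ∑ j, L i j * x (j, k) := by
  simp only [Matrix.mulVec, dotProduct, Fintype.sum_prod_type,
    Matrix.kronecker_apply, Matrix.one_apply, mul_ite, mul_one, mul_zero, ite_mul, zero_mul]
  simp [Finset.sum_ite_eq]

-- kernel of L ⊗ 1 for connected G : constancy in first coordinate
lemma lk_ker {N m : ℕ} (G : SimpleGraph (Fin N)) [DecidableRel G.Adj] (hG : G.Connected)
    (x : Fin N × Fin m → ℝ)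
    (hx : ((G.lapMatrix ℝ) ⊗ₖ (1 : Matrix (Fin m) (Fin m) ℝ)) *ᵥ x = 0)
    (i j : Fin N) (k : Fin m) : x (i, k) = x (j, k) := by
  have hL : Matrix.toLin' (G.lapMatrix ℝ) (fun i => x (i, k)) = 0 := by
    ext i
    have := congrFun hx (i, k)
    rw [lk_mulVec] at this
    simpa [Matrix.toLin'_apply, Matrix.mulVec, dotProduct] using this
  exact (G.lapMatrix_mulVec_eq_zero_iff_forall_reachable).mp (by rwa [Matrix.toLin'_apply] at hL) i j (hG.preconnected i j)

-- L ⊗ 1 kills vectors constant in the first coordinate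
lemma lk_const {N m : ℕ} (G : SimpleGraph (Fin N)) [DecidableRel G.Adj] (η : Fin m → ℝ) :
    ((G.lapMatrix ℝ) ⊗ₖ (1 : Matrix (Fin m) (Fin m) ℝ)) *ᵥ (fun p => η p.2) = 0 := by
  ext ⟨i, k⟩
  rw [lk_mulVec]
  have h0 := congrFun (G.lapMatrix_mulVec_const_eq_zero (R := ℝ)) i
  simp only [Matrix.mulVec, dotProduct, mul_one] at h0
  simp only [Pi.zero_apply]
  rw [← Finset.sum_mul, h0]
  simp

/-- For the Laplacian `L` of a connected graph and `h i` spanning `ℝ^m`, any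
`δ = [δ_a; δ_b]` with `M δ = 0` (`M = [[-H̃, -L⊗I_m],[L⊗I_m, 0]]`) satisfies `δ_a = 0`
and `δ_b = 1 ⊗ η` for some `η`; in particular `ker M` has dimension `m`. -/
theorem stmt_8 {N m : ℕ} (G : SimpleGraph (Fin N)) [DecidableRel G.Adj]
    (hG : G.Connected) (h : Fin N → Fin m → ℝ)
    (hspan : Submodule.span ℝ (Set.range h) = ⊤)
    (Htil : Matrix (Fin N × Fin m) (Fin N × Fin m) ℝ)
    (hHtil : ∀ p q : Fin N × Fin m,
      Htil p q = if p.1 = q.1 then h p.1 p.2 * h p.1 q.2 else 0)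
    (M : Matrix ((Fin N × Fin m) ⊕ (Fin N × Fin m))
          ((Fin N × Fin m) ⊕ (Fin N × Fin m)) ℝ)
    (hM : M = Matrix.fromBlocks (-Htil)
        (-((G.lapMatrix ℝ) ⊗ₖ (1 : Matrix (Fin m) (Fin m) ℝ)))
        ((G.lapMatrix ℝ) ⊗ₖ (1 : Matrix (Fin m) (Fin m) ℝ)) 0) :
    (∀ δa δb : Fin N × Fin m → ℝ, M.mulVec (Sum.elim δa δb) = 0 →
      δa = 0 ∧ ∃ η : Fin m → ℝ, δb = fun p => η p.2) ∧
    Module.finrank ℝ (LinearMap.ker M.mulVecLin) = m := by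
  set LK : Matrix (Fin N × Fin m) (Fin N × Fin m) ℝ :=
    (G.lapMatrix ℝ) ⊗ₖ (1 : Matrix (Fin m) (Fin m) ℝ) with hLK
  obtain ⟨i0⟩ := hG.nonempty
  have key : ∀ δa δb : Fin N × Fin m → ℝ, M.mulVec (Sum.elim δa δb) = 0 →
      δa = 0 ∧ ∃ η : Fin m → ℝ, δb = fun p => η p.2 := by
    intro δa δb hδ
    rw [hM, Matrix.fromBlocks_mulVec] at hδ
    have eq1 : (-Htil) *ᵥ δa + (-LK) *ᵥ δb = 0 := by
      have := congrFun hδ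
      ext p; exact this (Sum.inl p)
    have eq2 : LK *ᵥ δa = 0 := by
      ext p
      have := congrFun hδ (Sum.inr p)
      simpa using this
    -- δa is constant in the first coordinate
    set α : Fin m → ℝ := fun k => δa (i0, k) with hα
    have hconst : ∀ i k, δa (i, k) = α k := fun i k => lk_ker G hG δa eq2 i i0 k
    -- quadratic form vanishes
    have hquad : δa ⬝ᵥ (Htil *ᵥ δa) = 0 := by
      have e1 : Htil *ᵥ δa = -(LK *ᵥ δb) := by
        have := eq1
        rw [Matrix.neg_mulVec, Matrix.neg_mulVec, ← neg_add, neg_eq_zero] at this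
        exact eq_neg_of_add_eq_zero_left this
      rw [e1, dotProduct_neg, Matrix.dotProduct_mulVec]
      have hsym : δa ᵥ* LK = LK *ᵥ δa := by
        rw [← Matrix.mulVec_transpose]
        rw [hLK, ← Matrix.kroneckerMap_transpose]
        rw [(G.isSymm_lapMatrix (R := ℝ)).eq, Matrix.transpose_one]
      rw [hsym, eq2]
      simp
    -- compute the quadratic form as a sum of squares
    have hsq : δa ⬝ᵥ (Htil *ᵥ δa) = ∑ i, (∑ l, h i l * α l) ^ 2 := by
      simp only [dotProduct, Matrix.mulVec, Fintype.sum_prod_type, hHtil]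
      have : ∀ i k, (∑ j, ∑ l, (if i = j then h i k * h i l else 0) * δa (j, l))
          = h i k * ∑ l, h i l * α l := by
        intro i k
        rw [Finset.sum_eq_single i]
        · rw [Finset.mul_sum]
          refine Finset.sum_congr rfl fun l _ => ?_
          rw [if_pos rfl, hconst]; ring
        · intro j _ hj
          apply Finset.sum_eq_zero; intro l _
          rw [if_neg (Ne.symm hj), zero_mul]
        · intro hmem; exact absurd (Finset.mem_univ i) hmem
      refine Finset.sum_congr rfl fun i _ => ?_
      calc ∑ k, δa (i, k) * ∑ j, ∑ l, (if i = j then h i k * h i l else 0) * δa (j, l)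
          = ∑ k, α k * (h i k * ∑ l, h i l * α l) := by
            refine Finset.sum_congr rfl fun k _ => ?_
            rw [this i k, hconst]
        _ = (∑ k, h i k * α k) * (∑ l, h i l * α l) := by
            rw [Finset.sum_mul]
            refine Finset.sum_congr rfl fun k _ => ?_; ring
        _ = (∑ l, h i l * α l) ^ 2 := by rw [sq]
    rw [hsq] at hquad
    have hdot : ∀ i, ∑ l, h i l * α l = 0 := by
      intro i
      have := Finset.sum_eq_zero_iff_of_nonneg (fun i _ => sq_nonneg (∑ l, h i l * α l)) |>.mp
        hquad i (Finset.mem_univ i)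
      exact pow_eq_zero_iff (two_ne_zero) |>.mp this
    -- α = 0 via the span hypothesis
    have hα0 : α = 0 := by
      have hall : ∀ v ∈ Submodule.span ℝ (Set.range h), ∑ l, v l * α l = 0 := by
        intro v hv
        induction hv using Submodule.span_induction with
        | mem v hv => obtain ⟨i, rfl⟩ := hv; exact hdot i
        | zero => simp
        | add v w _ _ hv hw => simp only [Pi.add_apply, add_mul, Finset.sum_add_distrib, hv, hw,
            add_zero]
        | smul c v _ hv => simp only [Pi.smul_apply, smul_eq_mul, mul_assoc, ← Finset.mul_sum,
            hv, mul_zero]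
      have hmem : α ∈ Submodule.span ℝ (Set.range h) := hspan ▸ Submodule.mem_top
      have := hall α hmem
      funext k
      have hk := Finset.sum_eq_zero_iff_of_nonneg (fun l _ => mul_self_nonneg (α l)) |>.mp this k
        (Finset.mem_univ k)
      exact mul_self_eq_zero.mp hk
    have hδa0 : δa = 0 := by
      funext p
      obtain ⟨i, k⟩ := p
      rw [hconst, hα0]; rfl
    refine ⟨hδa0, ?_⟩
    -- now LK δb = 0
    have eqb : LK *ᵥ δb = 0 := by
      have := eq1
      rw [hδa0, Matrix.mulVec_zero, zero_add, Matrix.neg_mulVec, neg_eq_zero] at this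
      exact this
    refine ⟨fun k => δb (i0, k), ?_⟩
    funext p
    obtain ⟨i, k⟩ := p
    exact lk_ker G hG δb eqb i i0 k
  refine ⟨key, ?_⟩
  -- kernel dimension
  let Φ : (Fin m → ℝ) →ₗ[ℝ] ((Fin N × Fin m) ⊕ (Fin N × Fin m) → ℝ) :=
    { toFun := fun η => Sum.elim 0 (fun p => η p.2)
      map_add' := by intro η ξ; funext p; cases p <;> simp
      map_smul' := by intro c η; funext p; cases p <;> simp }
  have hker : LinearMap.ker M.mulVecLin = LinearMap.range Φ := by
    apply le_antisymm
    · intro x hx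
      rw [LinearMap.mem_ker, Matrix.mulVecLin_apply] at hx
      have hx' : M.mulVec (Sum.elim (fun p => x (Sum.inl p)) (fun p => x (Sum.inr p))) = 0 := by
        rw [show (Sum.elim (fun p => x (Sum.inl p)) (fun p => x (Sum.inr p))) = x from by
          funext p; cases p <;> rfl]
        exact hx
      obtain ⟨h0, η, hη⟩ := key _ _ hx'
      refine ⟨η, ?_⟩
      funext p
      cases p with
      | inl p => simp [Φ]; exact (congrFun h0 p).symm
      | inr p => simp [Φ]; exact (congrFun hη p).symm
    · rintro x ⟨η, rfl⟩
      rw [LinearMap.mem_ker, Matrix.mulVecLin_apply, hM]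
      show Matrix.fromBlocks (-Htil) (-LK) LK 0 *ᵥ
        Sum.elim 0 (fun p : Fin N × Fin m => η p.2) = 0
      rw [Matrix.fromBlocks_mulVec]
      have h1 : (-Htil) *ᵥ (0 : Fin N × Fin m → ℝ) = 0 := Matrix.mulVec_zero _
      have h2 : (-LK) *ᵥ (fun p => η p.2) = 0 := by
        rw [Matrix.neg_mulVec, lk_const G η, neg_zero]
      have h3 : LK *ᵥ (0 : Fin N × Fin m → ℝ) = 0 := Matrix.mulVec_zero _
      funext p
      cases p with
      | inl p => simp [h1, h2]
      | inr p => simp [h3]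
  rw [hker]
  have hinj : Function.Injective Φ := by
    intro η ξ hηξ
    funext k
    exact congrFun hηξ (Sum.inr (i0, k))
  rw [LinearMap.finrank_range_of_inj hinj, Module.finrank_fin_fun]
end

section
/- Let M be a real square matrix with Re(λ) < 0 for all nonzero eigenvalues λ and semisimple zero eigenvalue. Define ε* = min over λ ∈ σ(M) with Re(λ) ≠ 0 of (−2Re(λ)/|λ|²). Then for all 0 < ε < ε*, every eigenvalue μ of I + εM satisfies |μ| < 1 unless μ = 1, and the eigenvalue 1 of I + εM is semisimple with eigenspace equal to ker M. -/
open Matrix BigOperators Polynomial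

lemma aux_eval_charpoly {m : ℕ} {K : Type*} [Field K] (B : Matrix (Fin m) (Fin m) K) (x : K) :
    (Matrix.charpoly B).eval x = Matrix.det (x • (1 : Matrix (Fin m) (Fin m) K) - B) := by
  rw [Matrix.charpoly, _root_.eval_det, Matrix.matPolyEquiv_charmatrix]
  simp [Matrix.scalar_apply, smul_eq_diagonal_mul]

lemma aux_charpoly_shift {m : ℕ} (c : ℂ) (hc : c ≠ 0) (A : Matrix (Fin m) (Fin m) ℂ) :
    Matrix.charpoly (1 + c • A) =
      C (c ^ m) * (Matrix.charpoly A).comp (C c⁻¹ * (X - C 1)) := by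
  apply Polynomial.funext
  intro x
  rw [aux_eval_charpoly]
  simp only [eval_mul, eval_C, eval_comp, eval_sub, eval_X, eval_one, aux_eval_charpoly]
  have h1 : x • (1 : Matrix (Fin m) (Fin m) ℂ) - (1 + c • A)
      = c • ((c⁻¹ * (x - 1)) • (1 : Matrix (Fin m) (Fin m) ℂ) - A) := by
    rw [smul_sub, smul_smul, mul_inv_cancel_left₀ hc, sub_smul, one_smul]
    abel
  rw [h1, Matrix.det_smul, Fintype.card_fin]

lemma aux_rootMult {m : ℕ} (c : ℂ) (hc : c ≠ 0) (A : Matrix (Fin m) (Fin m) ℂ) :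
    (Matrix.charpoly (1 + c • A)).rootMultiplicity 1 =
      (Matrix.charpoly A).rootMultiplicity 0 := by
  set p := Matrix.charpoly A with hp
  have hp0 : p ≠ 0 := (Matrix.charpoly_monic A).ne_zero
  set k := p.rootMultiplicity 0 with hk
  set r := p /ₘ (X - C 0) ^ k with hr
  have hfac : (X - C (0:ℂ)) ^ k * r = p := p.pow_mul_divByMonic_rootMultiplicity_eq 0
  have hrev : r.eval 0 ≠ 0 := Polynomial.eval_divByMonic_pow_rootMultiplicity_ne_zero 0 hp0
  set L : ℂ[X] := C c⁻¹ * (X - C 1) with hL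
  have hLeval : L.eval 1 = 0 := by simp [hL]
  have hcomp : p.comp L = (C c⁻¹) ^ k * r.comp L * (X - C 1) ^ k := by
    rw [← hfac]
    simp only [mul_comp, pow_comp, sub_comp, X_comp, C_comp, hL, map_zero, sub_zero]
    rw [mul_pow]
    ring
  have key : Matrix.charpoly (1 + c • A)
      = (C (c ^ m) * (C c⁻¹) ^ k * r.comp L) * (X - C 1) ^ k := by
    rw [aux_charpoly_shift c hc A, hcomp]; ring
  have hs : ((C (c ^ m) * (C c⁻¹) ^ k * r.comp L) : ℂ[X]).eval 1 ≠ 0 := by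
    simp only [eval_mul, eval_pow, eval_C, eval_comp, hLeval]
    exact mul_ne_zero (mul_ne_zero (pow_ne_zero _ hc) (pow_ne_zero _ (inv_ne_zero hc))) hrev
  have hs0 : (C (c ^ m) * (C c⁻¹) ^ k * r.comp L : ℂ[X]) ≠ 0 := fun h => hs (by rw [h, eval_zero])
  rw [key, Polynomial.rootMultiplicity_mul_X_sub_C_pow hs0,
    Polynomial.rootMultiplicity_eq_zero (by simpa [Polynomial.IsRoot] using hs), zero_add]

lemma aux_eigenspace {m : ℕ} {K : Type*} [Field K] (c : K) (hc : c ≠ 0)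
    (A : Matrix (Fin m) (Fin m) K) :
    Module.End.eigenspace (Matrix.mulVecLin (1 + c • A)) 1 = LinearMap.ker A.mulVecLin := by
  ext x
  rw [Module.End.mem_eigenspace_iff, LinearMap.mem_ker]
  simp only [Matrix.mulVecLin_apply, Matrix.add_mulVec, Matrix.one_mulVec,
    Matrix.smul_mulVec, one_smul]
  constructor
  · intro h
    have : c • A.mulVec x = 0 := by
      have := congrArg (fun v => v - x) h
      simpa [add_sub_cancel_left] using this
    simpa [smul_eq_zero, hc] using this
  · intro h; simp [h]

lemma aux_map {m : ℕ} (ε : ℝ) (M : Matrix (Fin m) (Fin m) ℝ) :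
    ((1 + ε • M).map (Complex.ofReal)) = 1 + (ε : ℂ) • (M.map Complex.ofReal) := by
  ext i j
  simp only [Matrix.map_apply, Matrix.add_apply, Matrix.smul_apply, Matrix.one_apply,
    smul_eq_mul, Complex.ofReal_mul]
  split <;> push_cast <;> ring

lemma aux_spectrum {m : ℕ} (c : ℂ) (hc : c ≠ 0) (A : Matrix (Fin m) (Fin m) ℂ) (μ : ℂ)
    (hμ : μ ∈ spectrum ℂ (1 + c • A)) : ∃ lam ∈ spectrum ℂ A, μ = 1 + c * lam := by
  have h1 : (1 : Matrix (Fin m) (Fin m) ℂ) + c • A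
      = algebraMap ℂ (Matrix (Fin m) (Fin m) ℂ) 1 + c • A := by simp
  rw [h1, ← spectrum.singleton_add_eq] at hμ
  obtain ⟨a, ha, b, hb, hab⟩ := Set.mem_add.mp hμ
  rw [Set.mem_singleton_iff] at ha
  have h2 : c • A = (Units.mk0 c hc) • A := rfl
  rw [h2, spectrum.unit_smul_eq_smul] at hb
  obtain ⟨lam, hlam, hblam⟩ := hb
  exact ⟨lam, hlam, by rw [← hab, ha, ← hblam]; simp [Units.smul_def, smul_eq_mul]⟩

/-- Let `M` have all nonzero eigenvalues with negative real part and semisimple zero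
eigenvalue. If `0 < ε` and `ε < -2 Re λ / |λ|²` for every eigenvalue `λ` with `Re λ ≠ 0`
(i.e. `ε < ε*`), then every eigenvalue `μ ≠ 1` of `I + ε M` satisfies `|μ| < 1`, and the
eigenvalue `1` of `I + ε M` is semisimple with eigenspace equal to `ker M`. -/
theorem stmt_12 {n : ℕ} (M : Matrix (Fin n) (Fin n) ℝ)
    (hstab : ∀ lam ∈ spectrum ℂ (M.map (Complex.ofReal)), lam ≠ 0 → lam.re < 0)
    (hsemi : (Matrix.charpoly (M.map (Complex.ofReal))).rootMultiplicity 0 =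
      Module.finrank ℂ (LinearMap.ker (Matrix.mulVecLin (M.map (Complex.ofReal)))))
    (ε : ℝ) (hε : 0 < ε)
    (hεstar : ∀ lam ∈ spectrum ℂ (M.map (Complex.ofReal)), lam.re ≠ 0 →
      ε < -(2 * lam.re) / Complex.normSq lam) :
    (∀ μ ∈ spectrum ℂ ((1 + ε • M).map (Complex.ofReal)), μ ≠ 1 → ‖μ‖ < 1) ∧
    (Matrix.charpoly ((1 + ε • M).map (Complex.ofReal))).rootMultiplicity 1 =
      Module.finrank ℂ
        (Module.End.eigenspace (Matrix.mulVecLin ((1 + ε • M).map (Complex.ofReal))) 1) ∧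
    Module.End.eigenspace (Matrix.mulVecLin (1 + ε • M)) 1 = LinearMap.ker M.mulVecLin := by
  have hc : (ε : ℂ) ≠ 0 := by exact_mod_cast hε.ne'
  refine ⟨?_, ?_, ?_⟩
  · intro μ hμ hμ1
    rw [aux_map] at hμ
    obtain ⟨lam, hlam, hμeq⟩ := aux_spectrum (ε : ℂ) hc _ μ hμ
    subst hμeq
    have hlam0 : lam ≠ 0 := by rintro rfl; simp at hμ1
    have hre := hstab lam hlam hlam0
    have hsq := hεstar lam hlam (ne_of_lt hre)
    have hns : 0 < Complex.normSq lam := Complex.normSq_pos.mpr hlam0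
    have h2 : ε * Complex.normSq lam < -(2 * lam.re) := (lt_div_iff₀ hns).mp hsq
    have habs : Complex.normSq (1 + (ε:ℂ) * lam)
        = (1 + ε * lam.re)^2 + (ε * lam.im)^2 := by
      simp [Complex.normSq_apply]; ring
    have hns2 : Complex.normSq lam = lam.re^2 + lam.im^2 := by
      simp [Complex.normSq_apply]; ring
    rw [hns2] at h2
    have key : Complex.normSq (1 + (ε:ℂ) * lam) < 1 := by
      rw [habs]
      nlinarith [mul_lt_mul_of_pos_left h2 hε]
    nlinarith [Complex.sq_norm (1 + (ε:ℂ) * lam), norm_nonneg (1 + (ε:ℂ) * lam), key]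
  · rw [aux_map, aux_rootMult (ε:ℂ) hc, aux_eigenspace (ε:ℂ) hc]
    exact hsemi
  · exact aux_eigenspace ε hε.ne' M
end
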